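/- Let x₁, …, x_N be i.i.d. random variables with values in ℝ such that P(x_i² < N^{−51/50}) ≤ C₀ N^{−1/100} for a constant C₀. Then P(‖x‖ < N^{−1/40}) ≤ N^{(101/100) N^{49/50}} e^{1/C₀} C₀^N N^{−N/100}; in particular P(‖x‖ < N^{−1/40}) = o(C^{−N}) for every constant C > 0. -/

import Mathlib

open MeasureTheory ProbabilityTheory Filter
open scoped Nat

lemma aux_term_le_exp (y : ℝ) (hy : 0 ≤ y) (k : ℕ) : y ^ k / k ! ≤ Real.exp y := by
  calc y ^ k / k ! ≤ ∑ i ∈ Finset.range (k+1), y ^ i / i ! := by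
        refine Finset.single_le_sum (f := fun i => y ^ i / (i ! : ℝ)) ?_
          (Finset.self_mem_range_succ k)
        intro i _
        positivity
    _ ≤ Real.exp y := Real.sum_le_exp_of_nonneg hy _

lemma aux_choose (N k : ℕ) : (N.choose k : ℝ) ≤ (N:ℝ) ^ k / k ! := by
  rw [le_div_iff₀ (by positivity)]
  have h := Nat.descFactorial_le_pow N k
  rw [Nat.descFactorial_eq_factorial_mul_choose] at h
  rw [mul_comm]
  exact_mod_cast h

lemma aux_analytic (N k : ℕ) (hN : 1 ≤ N) (hk : k ≤ N)
    (hk98 : (k : ℝ) ≤ (N : ℝ) ^ ((49 : ℝ) / 50)) (C₀ : ℝ) (hC₀ : 0 < C₀) :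
    (N.choose (N - k) : ℝ) * (C₀ * (N : ℝ) ^ (-(1 / 100) : ℝ)) ^ (N - k)
      ≤ (N : ℝ) ^ ((101 / 100) * (N : ℝ) ^ ((49 : ℝ) / 50)) * Real.exp (1 / C₀) *
          C₀ ^ N * (N : ℝ) ^ (-(N : ℝ) / 100) := by
  have hNpos : (0 : ℝ) < N := by exact_mod_cast Nat.lt_of_lt_of_le Nat.zero_lt_one hN
  have hNr : (1 : ℝ) ≤ (N : ℝ) := by exact_mod_cast hN
  set m := N - k with hm
  have hmk : m + k = N := Nat.sub_add_cancel hk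
  have hmkR : (m : ℝ) + (k : ℝ) = (N : ℝ) := by exact_mod_cast congrArg (Nat.cast (R := ℝ)) hmk
  rw [Nat.choose_symm hk]
  set a : ℝ := (N:ℝ) ^ ((k:ℝ)) with ha
  set b : ℝ := (N:ℝ) ^ ((k:ℝ)/100) with hb
  set c : ℝ := (N:ℝ) ^ (-(m:ℝ)/100) with hc
  have hbpos : 0 < b := Real.rpow_pos_of_pos hNpos _
  have hcpos : 0 < c := Real.rpow_pos_of_pos hNpos _
  have hapos : 0 < a := Real.rpow_pos_of_pos hNpos _
  have e1 : ((N:ℝ) ^ (-(1 / 100) : ℝ)) ^ m = c := by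
    rw [hc, ← Real.rpow_natCast ((N:ℝ) ^ (-(1 / 100) : ℝ)) m, ← Real.rpow_mul (le_of_lt hNpos)]
    congr 1; ring
  have e2 : (N:ℝ) ^ (k:ℕ) = a := by rw [ha, Real.rpow_natCast]
  have e3 : (N:ℝ) ^ (-(N:ℝ)/100) = c / b := by
    rw [hc, hb, ← Real.rpow_sub hNpos]
    congr 1; rw [← hmkR]; ring
  have hfact : (0:ℝ) < k ! := by exact_mod_cast Nat.factorial_pos k
  calc (N.choose k : ℝ) * (C₀ * (N : ℝ) ^ (-(1 / 100) : ℝ)) ^ m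
      ≤ ((N:ℝ) ^ (k:ℕ) / k !) * (C₀ * (N : ℝ) ^ (-(1 / 100) : ℝ)) ^ m := by
        apply mul_le_mul_of_nonneg_right (aux_choose N k)
        positivity
    _ = (a * b * ((1/C₀) ^ k / k !)) * (C₀ ^ N * (c / b)) := by
        rw [mul_pow, e1, e2, ← hmk, pow_add]
        field_simp
        ring_nf
        rw [← mul_pow, mul_inv_cancel₀ hC₀.ne', one_pow]
    _ ≤ ((N : ℝ) ^ ((101 / 100) * (N : ℝ) ^ ((49 : ℝ) / 50)) * Real.exp (1 / C₀)) *
          (C₀ ^ N * (c / b)) := by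
        apply mul_le_mul_of_nonneg_right _ (by positivity)
        have h1 : a * b ≤ (N : ℝ) ^ ((101 / 100) * (N : ℝ) ^ ((49 : ℝ) / 50)) := by
          rw [ha, hb, ← Real.rpow_add hNpos]
          apply Real.rpow_le_rpow_of_exponent_le hNr
          linarith
        have h2 : (1/C₀) ^ k / k ! ≤ Real.exp (1 / C₀) := aux_term_le_exp _ (by positivity) k
        exact mul_le_mul h1 h2 (by positivity) (by positivity)
    _ = (N : ℝ) ^ ((101 / 100) * (N : ℝ) ^ ((49 : ℝ) / 50)) * Real.exp (1 / C₀) *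
          C₀ ^ N * (N : ℝ) ^ (-(N:ℝ)/100) := by rw [e3]; ring

/-- lower bound on the norm of an i.i.d. vector with small atoms near zero. -/
theorem stmt5
    {Ω : ℕ → Type*} [∀ N, MeasurableSpace (Ω N)]
    (μ : ∀ N, Measure (Ω N)) [∀ N, IsProbabilityMeasure (μ N)]
    (x : ∀ N, Fin N → Ω N → ℝ)
    (hmeas : ∀ N i, Measurable (x N i))
    (hindep : ∀ N, iIndepFun (x N) (μ N))
    (hident : ∀ N (i j : Fin N), (μ N).map (x N i) = (μ N).map (x N j))
    (C₀ : ℝ) (hC₀ : 0 < C₀)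
    (htail : ∀ N (i : Fin N),
      ((μ N) {ω | (x N i ω) ^ 2 < (N : ℝ) ^ (-(51 / 50) : ℝ)}).toReal
        ≤ C₀ * (N : ℝ) ^ (-(1 / 100) : ℝ)) :
    (∀ N : ℕ, 1 ≤ N →
      ((μ N) {ω | Real.sqrt (∑ i, (x N i ω) ^ 2) < (N : ℝ) ^ (-(1 / 40) : ℝ)}).toReal
        ≤ (N : ℝ) ^ ((101 / 100) * (N : ℝ) ^ ((49 : ℝ) / 50)) * Real.exp (1 / C₀) *
            C₀ ^ N * (N : ℝ) ^ (-(N : ℝ) / 100)) ∧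
    ∀ C : ℝ, 0 < C →
      Tendsto (fun N =>
        ((μ N) {ω | Real.sqrt (∑ i, (x N i ω) ^ 2) < (N : ℝ) ^ (-(1 / 40) : ℝ)}).toReal * C ^ N)
        atTop (nhds 0) := by
  have key : ∀ N : ℕ, 1 ≤ N →
      ((μ N) {ω | Real.sqrt (∑ i, (x N i ω) ^ 2) < (N : ℝ) ^ (-(1 / 40) : ℝ)}).toReal
        ≤ (N : ℝ) ^ ((101 / 100) * (N : ℝ) ^ ((49 : ℝ) / 50)) * Real.exp (1 / C₀) *
            C₀ ^ N * (N : ℝ) ^ (-(N : ℝ) / 100) := by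
    intro N hN
    have hNpos : (0 : ℝ) < N := by exact_mod_cast Nat.lt_of_lt_of_le Nat.zero_lt_one hN
    have hNr : (1 : ℝ) ≤ (N : ℝ) := by exact_mod_cast hN
    set thr : ℝ := (N : ℝ) ^ (-(51 / 50) : ℝ) with hthr
    have hthrpos : 0 < thr := Real.rpow_pos_of_pos hNpos _
    set X : ℝ := (N : ℝ) ^ ((97 : ℝ) / 100) with hX
    have hX1 : 1 ≤ X := Real.one_le_rpow hNr (by norm_num)
    have hceil : 1 ≤ ⌈X⌉₊ := Nat.one_le_iff_ne_zero.mpr (by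
      simp only [ne_eq, Nat.ceil_eq_zero, not_le]; linarith)
    set k : ℕ := ⌈X⌉₊ - 1 with hkdef
    have hkX : (k : ℝ) < X := by
      rw [← Nat.lt_ceil]
      exact Nat.sub_lt (by omega) one_pos
    have hkN : k ≤ N := by
      have hXN : X ≤ (N : ℝ) := by
        calc X ≤ (N:ℝ) ^ (1:ℝ) := Real.rpow_le_rpow_of_exponent_le hNr (by norm_num)
          _ = N := Real.rpow_one _
      have : (k : ℝ) < (N : ℝ) := lt_of_lt_of_le hkX hXN
      exact_mod_cast this.le
    have hk98 : (k : ℝ) ≤ (N : ℝ) ^ ((49 : ℝ) / 50) := by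
      have : X ≤ (N:ℝ) ^ ((49:ℝ)/50) := Real.rpow_le_rpow_of_exponent_le hNr (by norm_num)
      linarith
    set m : ℕ := N - k with hmdef
    set A : Fin N → Set (Ω N) := fun i => {ω | x N i ω ^ 2 < thr} with hA
    have hAset : MeasurableSet {t : ℝ | t ^ 2 < thr} :=
      measurableSet_lt (by measurability) measurable_const
    have hAcomap : ∀ i : Fin N,
        MeasurableSet[MeasurableSpace.comap (x N i) (inferInstance : MeasurableSpace ℝ)] (A i) :=
      fun i => ⟨{t : ℝ | t ^ 2 < thr}, hAset, rfl⟩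
    set 𝒮 := Finset.powersetCard m (Finset.univ : Finset (Fin N)) with h𝒮
    have hsub : {ω | Real.sqrt (∑ i, (x N i ω) ^ 2) < (N : ℝ) ^ (-(1 / 40) : ℝ)}
        ⊆ ⋃ S ∈ 𝒮, ⋂ i ∈ S, A i := by
      intro ω hω
      have hω' : Real.sqrt (∑ i, x N i ω ^ 2) < (N : ℝ) ^ (-(1 / 40) : ℝ) := hω
      have hsum : (∑ i, x N i ω ^ 2) < ((N : ℝ) ^ (-(1 / 40) : ℝ)) ^ 2 :=
        (Real.sqrt_lt' (Real.rpow_pos_of_pos hNpos _)).mp hω'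
      have hsum2 : (∑ i, x N i ω ^ 2) < (N : ℝ) ^ (-(1 / 20) : ℝ) := by
        refine hsum.trans_le (le_of_eq ?_)
        rw [← Real.rpow_natCast ((N:ℝ) ^ (-(1/40):ℝ)) 2, ← Real.rpow_mul hNpos.le]
        norm_num
      set T : Finset (Fin N) := Finset.univ.filter (fun i => thr ≤ x N i ω ^ 2) with hT
      have hTsum : (T.card : ℝ) * thr ≤ ∑ i, x N i ω ^ 2 := by
        calc (T.card : ℝ) * thr = ∑ _i ∈ T, thr := by rw [Finset.sum_const, nsmul_eq_mul]
          _ ≤ ∑ i ∈ T, x N i ω ^ 2 :=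
              Finset.sum_le_sum (fun i hi => (Finset.mem_filter.mp hi).2)
          _ ≤ ∑ i, x N i ω ^ 2 :=
              Finset.sum_le_sum_of_subset_of_nonneg (Finset.subset_univ T)
                (fun i _ _ => sq_nonneg _)
      have hTX : (T.card : ℝ) < X := by
        have h1 : (T.card : ℝ) * thr < (N : ℝ) ^ (-(1 / 20) : ℝ) := lt_of_le_of_lt hTsum hsum2
        have h2 : (T.card : ℝ) < (N : ℝ) ^ (-(1 / 20) : ℝ) / thr := (lt_div_iff₀ hthrpos).mpr h1
        refine h2.trans_le (le_of_eq ?_)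
        rw [hthr, hX, ← Real.rpow_sub hNpos]
        norm_num
      have hTk : T.card ≤ k := by
        have : T.card < ⌈X⌉₊ := Nat.lt_ceil.mpr hTX
        omega
      have hcompl : m ≤ Tᶜ.card := by
        rw [Finset.card_compl]
        simp only [Fintype.card_fin]
        omega
      obtain ⟨S, hSsub, hScard⟩ := Finset.exists_subset_card_eq hcompl
      refine Set.mem_iUnion₂.mpr ⟨S, ?_, ?_⟩
      · exact Finset.mem_powersetCard.mpr ⟨Finset.subset_univ S, hScard⟩
      · refine Set.mem_iInter₂.mpr (fun i hi => ?_)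
        have hiT : i ∈ Tᶜ := hSsub hi
        have : ¬ (thr ≤ x N i ω ^ 2) := by
          intro hcon
          exact (Finset.mem_compl.mp hiT) (Finset.mem_filter.mpr ⟨Finset.mem_univ i, hcon⟩)
        exact not_le.mp this
    have hmeas1 : (μ N) {ω | Real.sqrt (∑ i, (x N i ω) ^ 2) < (N : ℝ) ^ (-(1 / 40) : ℝ)}
        ≤ ∑ S ∈ 𝒮, (μ N) (⋂ i ∈ S, A i) :=
      (measure_mono hsub).trans (measure_biUnion_finset_le 𝒮 _)
    have hprod : ∀ S ∈ 𝒮, (μ N) (⋂ i ∈ S, A i) = ∏ i ∈ S, (μ N) (A i) :=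
      fun S _ => (hindep N).meas_biInter (fun i _ => hAcomap i)
    have hsum_ne_top : (∑ S ∈ 𝒮, (μ N) (⋂ i ∈ S, A i)) ≠ ⊤ :=
      (ENNReal.sum_lt_top.mpr fun S _ => measure_lt_top _ _).ne
    calc ((μ N) {ω | Real.sqrt (∑ i, (x N i ω) ^ 2) < (N : ℝ) ^ (-(1 / 40) : ℝ)}).toReal
        ≤ (∑ S ∈ 𝒮, (μ N) (⋂ i ∈ S, A i)).toReal := ENNReal.toReal_mono hsum_ne_top hmeas1
      _ = ∑ S ∈ 𝒮, ((μ N) (⋂ i ∈ S, A i)).toReal :=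
          ENNReal.toReal_sum (fun S _ => (measure_lt_top _ _).ne)
      _ ≤ ∑ _S ∈ 𝒮, (C₀ * (N : ℝ) ^ (-(1 / 100) : ℝ)) ^ m := by
          refine Finset.sum_le_sum (fun S hS => ?_)
          rw [hprod S hS, ENNReal.toReal_prod]
          have hcard : S.card = m := (Finset.mem_powersetCard.mp hS).2
          calc ∏ i ∈ S, ((μ N) (A i)).toReal
              ≤ ∏ _i ∈ S, (C₀ * (N : ℝ) ^ (-(1 / 100) : ℝ)) :=
                Finset.prod_le_prod (fun i _ => ENNReal.toReal_nonneg) (fun i _ => htail N i)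
            _ = (C₀ * (N : ℝ) ^ (-(1 / 100) : ℝ)) ^ m := by
                rw [Finset.prod_const, hcard]
      _ = (N.choose m : ℝ) * (C₀ * (N : ℝ) ^ (-(1 / 100) : ℝ)) ^ m := by
          rw [Finset.sum_const, nsmul_eq_mul, h𝒮, Finset.card_powersetCard, Finset.card_univ,
            Fintype.card_fin]
      _ ≤ (N : ℝ) ^ ((101 / 100) * (N : ℝ) ^ ((49 : ℝ) / 50)) * Real.exp (1 / C₀) *
            C₀ ^ N * (N : ℝ) ^ (-(N : ℝ) / 100) := aux_analytic N k hN hkN hk98 C₀ hC₀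
  refine ⟨key, ?_⟩
  intro C hC
  have hlim : Tendsto (fun N : ℕ => Real.exp (1 / C₀ - N)) atTop (nhds 0) := by
    apply Real.tendsto_exp_atBot.comp
    simp only [sub_eq_add_neg]
    apply tendsto_atBot_add_const_left
    exact tendsto_neg_atBot_iff.mpr tendsto_natCast_atTop_atTop
  have ev1 : ∀ᶠ N : ℕ in atTop, 2 ≤ N := eventually_ge_atTop 2
  have ev2 : ∀ᶠ N : ℕ in atTop, (202 : ℝ) ≤ (N : ℝ) ^ ((1 : ℝ) / 50) :=
    ((tendsto_rpow_atTop (by norm_num : (0:ℝ) < 1/50)).comp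
      tendsto_natCast_atTop_atTop).eventually_ge_atTop 202
  have ev3 : ∀ᶠ N : ℕ in atTop,
      200 * (Real.log C₀ + Real.log C + 1) ≤ Real.log N :=
    (Real.tendsto_log_atTop.comp tendsto_natCast_atTop_atTop).eventually_ge_atTop _
  refine squeeze_zero' ?_ ?_ hlim
  · filter_upwards with N
    exact mul_nonneg ENNReal.toReal_nonneg (pow_nonneg hC.le N)
  · filter_upwards [ev1, ev2, ev3] with N h1 h2 h3
    have hNpos : (0 : ℝ) < N := by exact_mod_cast Nat.lt_of_lt_of_le Nat.zero_lt_one (by omega)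
    have hNr1 : (1:ℝ) < (N:ℝ) := by exact_mod_cast (by omega : 1 < N)
    set L := Real.log (N:ℝ) with hL
    have hLpos : 0 < L := Real.log_pos hNr1
    have hB := key N (by omega)
    have step1 : ((μ N) {ω | Real.sqrt (∑ i, (x N i ω) ^ 2) < (N : ℝ) ^ (-(1 / 40) : ℝ)}).toReal
          * C ^ N
        ≤ ((N : ℝ) ^ ((101 / 100) * (N : ℝ) ^ ((49 : ℝ) / 50)) *
        Real.exp (1 / C₀) * C₀ ^ N * (N : ℝ) ^ (-(N : ℝ) / 100)) * C ^ N :=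
      mul_le_mul_of_nonneg_right hB (pow_nonneg hC.le N)
    refine step1.trans ?_
    have r1 : (N : ℝ) ^ ((101 / 100) * (N : ℝ) ^ ((49 : ℝ) / 50)) =
        Real.exp (L * ((101/100) * (N:ℝ)^((49:ℝ)/50))) := Real.rpow_def_of_pos hNpos _
    have r2 : (N : ℝ) ^ (-(N:ℝ)/100) = Real.exp (L * (-(N:ℝ)/100)) := Real.rpow_def_of_pos hNpos _
    have r3 : C₀ ^ N = Real.exp ((N:ℝ) * Real.log C₀) := by
      rw [← Real.exp_log hC₀, ← Real.exp_nat_mul, Real.exp_log hC₀]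
    have r4 : C ^ N = Real.exp ((N:ℝ) * Real.log C) := by
      rw [← Real.exp_log hC, ← Real.exp_nat_mul, Real.exp_log hC]
    rw [r1, r2, r3, r4, ← Real.exp_add, ← Real.exp_add, ← Real.exp_add, ← Real.exp_add]
    apply Real.exp_le_exp.mpr
    have hsplit : (N:ℝ) = (N:ℝ)^((49:ℝ)/50) * (N:ℝ)^((1:ℝ)/50) := by
      rw [← Real.rpow_add hNpos]; norm_num
    have h49 : (0:ℝ) ≤ (N:ℝ)^((49:ℝ)/50) := (Real.rpow_pos_of_pos hNpos _).le
    have inner : (101/100) * (N:ℝ)^((49:ℝ)/50) ≤ (N:ℝ)/200 := by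
      nlinarith [mul_le_mul_of_nonneg_left h2 h49]
    have fact1 : L * ((101/100) * (N:ℝ)^((49:ℝ)/50)) ≤ L * ((N:ℝ)/200) :=
      mul_le_mul_of_nonneg_left inner hLpos.le
    have fact2 : (N:ℝ) * (Real.log C₀ + Real.log C) ≤ (N:ℝ) * (L/200 - 1) :=
      mul_le_mul_of_nonneg_left (by linarith) (Nat.cast_nonneg N)
    nlinarith [fact1, fact2]
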